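/- For every sufficiently large integer k, one has gcd(x_{k,0}, A_k) = gcd(x_{k,0}, E_k) = cont(Q_{k+1}), and this common value is 1 or 2. -/

import Mathlib

open Polynomial Filter

noncomputable def gold : ℝ := (1 + Real.sqrt 5) / 2

def Mmat (k : ℕ) : Matrix (Fin 2) (Fin 2) ℤ := !![3, (-1)^k; (-1)^(k+1), 0]

noncomputable def Xnorm (x : ℕ → Matrix (Fin 2) (Fin 2) ℤ) (k : ℕ) : ℝ :=
  max |(x k 0 0 : ℝ)| (max |(x k 0 1 : ℝ)| |(x k 1 1 : ℝ)|)

def MarkoffSeq (ξ : ℝ) (x : ℕ → Matrix (Fin 2) (Fin 2) ℤ) : Prop :=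
  (∀ k, 1 ≤ k → x k 0 1 = x k 1 0) ∧
  (∀ k, 1 ≤ k → (x k).det = 1) ∧
  ∃ c₁ c₂ c₃ : ℝ, 0 < c₁ ∧ 0 < c₂ ∧ 0 < c₃ ∧ ∀ k, 1 ≤ k →
    (c₁ * Xnorm x k ^ gold ≤ Xnorm x (k+1) ∧ Xnorm x (k+1) ≤ c₂ * Xnorm x k ^ gold) ∧
    (|(x k 0 0 : ℝ) * ξ - (x k 0 1 : ℝ)| ≤ c₃ / Xnorm x k ∧
     |(x k 0 1 : ℝ) * ξ - (x k 1 1 : ℝ)| ≤ c₃ / Xnorm x k) ∧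
    (x (k+2) = x (k+1) * Mmat (k+1) * x k ∧ x (k+2) = x k * Mmat k * x (k+1)) ∧
    (Xnorm x k < Xnorm x (k+1) ∧ Xnorm x k < (1 + ξ^2) * |(x k 0 0 : ℝ)|)

def polyNorm (P : Polynomial ℤ) : ℕ := P.support.sup fun i => (P.coeff i).natAbs

noncomputable def distInt (η : ℝ) : ℝ := |η - round η|

noncomputable def ratHeight (α : ℚ) : ℝ := max |(α.num : ℝ)| (α.den : ℝ)

def IsMinIntPoly (α : ℂ) (P : Polynomial ℤ) : Prop :=
  P ≠ 0 ∧ Polynomial.aeval α P = 0 ∧ P.content = 1 ∧ 0 < P.leadingCoeff ∧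
  ∀ Q : Polynomial ℤ, Q ≠ 0 → Polynomial.aeval α Q = 0 → P.degree ≤ Q.degree

noncomputable def Qpoly (x : ℕ → Matrix (Fin 2) (Fin 2) ℤ) (k : ℕ) : Polynomial ℤ :=
  Polynomial.C (x k 0 1 * x (k+1) 1 1 - x k 1 1 * x (k+1) 0 1)
  - Polynomial.C (x k 0 0 * x (k+1) 1 1 - x k 1 1 * x (k+1) 0 0) * Polynomial.X
  + Polynomial.C (x k 0 0 * x (k+1) 0 1 - x k 0 1 * x (k+1) 0 0) * Polynomial.X ^ 2


lemma zmod_par1 : ∀ a b c B C e hh Ak q0 : ZMod 2,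
    a*c - b*b = 1 → e*e = 1 →
    Ak = a*(c*C*e + 3*c*B) - 2*C*e - 3*B - b*c*B*e →
    q0 = a*hh - b*B*Ak → a = 0 → q0 = 0 → Ak = 0 := by decide

lemma zmod_par2 : ∀ a b c A B C e hh Ak Ek : ZMod 2,
    a*c - b*b = 1 → A*C - B*B = 1 → e*e = 1 →
    3*(a*B - b*A) + e*(a*C + c*A - 2*b*B) = 0 →
    Ak = a*(c*C*e + 3*c*B) - 2*C*e - 3*B - b*c*B*e →
    Ek = (-(c*A*B*e) + b*e + 2*b*B^2*e + 3*b*A*B)*Ak + a*hh →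
    a = 0 → Ek = 0 → Ak = 0 := by decide

lemma aux_par1 (a b c B C e hh Ak q0 : ℤ) (h1 : a*c - b*b = 1) (he : e*e = 1)
    (hG : Ak = a*(c*C*e + 3*c*B) - 2*C*e - 3*B - b*c*B*e)
    (hq0 : q0 = a*hh - b*B*Ak) (ha : (2:ℤ) ∣ a) (hq : (2:ℤ) ∣ q0) : (2:ℤ) ∣ Ak := by
  have ha' : ((a : ZMod 2)) = 0 := by rw [ZMod.intCast_zmod_eq_zero_iff_dvd]; exact_mod_cast ha
  have hq' : ((q0 : ZMod 2)) = 0 := by rw [ZMod.intCast_zmod_eq_zero_iff_dvd]; exact_mod_cast hq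
  have hgoal : ((Ak : ZMod 2)) = 0 → (2:ℤ) ∣ Ak := fun h =>
    by exact_mod_cast (ZMod.intCast_zmod_eq_zero_iff_dvd Ak 2).mp h
  apply hgoal
  have z1 : (a : ZMod 2) * (c : ZMod 2) - (b : ZMod 2) * (b : ZMod 2) = 1 := by
    have := congrArg (fun t : ℤ => (t : ZMod 2)) h1; push_cast at this; linear_combination this
  have ze : (e : ZMod 2) * (e : ZMod 2) = 1 := by
    have := congrArg (fun t : ℤ => (t : ZMod 2)) he; push_cast at this; linear_combination this
  have zG : (Ak : ZMod 2) = (a:ZMod 2)*((c:ZMod 2)*(C:ZMod 2)*(e:ZMod 2) + 3*(c:ZMod 2)*(B:ZMod 2)) - 2*(C:ZMod 2)*(e:ZMod 2) - 3*(B:ZMod 2) - (b:ZMod 2)*(c:ZMod 2)*(B:ZMod 2)*(e:ZMod 2) := by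
    have := congrArg (fun t : ℤ => (t : ZMod 2)) hG; push_cast at this; linear_combination this
  have zq : (q0 : ZMod 2) = (a:ZMod 2)*(hh:ZMod 2) - (b:ZMod 2)*(B:ZMod 2)*(Ak:ZMod 2) := by
    have := congrArg (fun t : ℤ => (t : ZMod 2)) hq0; push_cast at this; linear_combination this
  exact zmod_par1 (a:ZMod 2) (b:ZMod 2) (c:ZMod 2) (B:ZMod 2) (C:ZMod 2) (e:ZMod 2)
    (hh:ZMod 2) (Ak:ZMod 2) (q0:ZMod 2) z1 ze zG zq ha' hq'

lemma aux_par2 (a b c A B C e hh Ak Ek : ℤ) (h1 : a*c - b*b = 1) (h2 : A*C - B*B = 1)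
    (he : e*e = 1) (hr : 3*(a*B - b*A) + e*(a*C + c*A - 2*b*B) = 0)
    (hG : Ak = a*(c*C*e + 3*c*B) - 2*C*e - 3*B - b*c*B*e)
    (hE : Ek = (-(c*A*B*e) + b*e + 2*b*B^2*e + 3*b*A*B)*Ak + a*hh)
    (ha : (2:ℤ) ∣ a) (hq : (2:ℤ) ∣ Ek) : (2:ℤ) ∣ Ak := by
  have ha' : ((a : ZMod 2)) = 0 := by rw [ZMod.intCast_zmod_eq_zero_iff_dvd]; exact_mod_cast ha
  have hq' : ((Ek : ZMod 2)) = 0 := by rw [ZMod.intCast_zmod_eq_zero_iff_dvd]; exact_mod_cast hq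
  have hgoal : ((Ak : ZMod 2)) = 0 → (2:ℤ) ∣ Ak := fun h =>
    by exact_mod_cast (ZMod.intCast_zmod_eq_zero_iff_dvd Ak 2).mp h
  apply hgoal
  have z1 : (a : ZMod 2) * (c : ZMod 2) - (b : ZMod 2) * (b : ZMod 2) = 1 := by
    have := congrArg (fun t : ℤ => (t : ZMod 2)) h1; push_cast at this; linear_combination this
  have z2 : (A : ZMod 2) * (C : ZMod 2) - (B : ZMod 2) * (B : ZMod 2) = 1 := by
    have := congrArg (fun t : ℤ => (t : ZMod 2)) h2; push_cast at this; linear_combination this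
  have ze : (e : ZMod 2) * (e : ZMod 2) = 1 := by
    have := congrArg (fun t : ℤ => (t : ZMod 2)) he; push_cast at this; linear_combination this
  have zr : 3*((a:ZMod 2)*(B:ZMod 2) - (b:ZMod 2)*(A:ZMod 2)) + (e:ZMod 2)*((a:ZMod 2)*(C:ZMod 2) + (c:ZMod 2)*(A:ZMod 2) - 2*(b:ZMod 2)*(B:ZMod 2)) = 0 := by
    have := congrArg (fun t : ℤ => (t : ZMod 2)) hr; push_cast at this; linear_combination this
  have zG : (Ak : ZMod 2) = (a:ZMod 2)*((c:ZMod 2)*(C:ZMod 2)*(e:ZMod 2) + 3*(c:ZMod 2)*(B:ZMod 2)) - 2*(C:ZMod 2)*(e:ZMod 2) - 3*(B:ZMod 2) - (b:ZMod 2)*(c:ZMod 2)*(B:ZMod 2)*(e:ZMod 2) := by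
    have := congrArg (fun t : ℤ => (t : ZMod 2)) hG; push_cast at this; linear_combination this
  have zE : (Ek : ZMod 2) = (-((c:ZMod 2)*(A:ZMod 2)*(B:ZMod 2)*(e:ZMod 2)) + (b:ZMod 2)*(e:ZMod 2) + 2*(b:ZMod 2)*(B:ZMod 2)^2*(e:ZMod 2) + 3*(b:ZMod 2)*(A:ZMod 2)*(B:ZMod 2))*(Ak:ZMod 2) + (a:ZMod 2)*(hh:ZMod 2) := by
    have := congrArg (fun t : ℤ => (t : ZMod 2)) hE; push_cast at this; linear_combination this
  exact zmod_par2 (a:ZMod 2) (b:ZMod 2) (c:ZMod 2) (A:ZMod 2) (B:ZMod 2) (C:ZMod 2) (e:ZMod 2)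
    (hh:ZMod 2) (Ak:ZMod 2) (Ek:ZMod 2) z1 z2 ze zr zG zE ha' hq'

set_option maxHeartbeats 4000000 in
theorem stmt11 (ξ : ℝ) (x : ℕ → Matrix (Fin 2) (Fin 2) ℤ) (hx : MarkoffSeq ξ x) :
    ∃ N : ℕ, ∀ k, N ≤ k →
      (Int.gcd (x k 0 0) (x k 0 1 * x (k+2) 1 1 - (-1)^k * x (k+1) 1 1) : ℤ)
        = (Qpoly x (k+1)).content ∧
      (Int.gcd (x k 0 0)
          (x k 0 1 * x (k+4) 1 1 - 3 * (-1)^k * x (k+1) 0 0 * x (k+3) 1 1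
            - (-1)^k * x (k+2) 1 1) : ℤ)
        = (Qpoly x (k+1)).content ∧
      ((Qpoly x (k+1)).content = 1 ∨ (Qpoly x (k+1)).content = 2) := by
  obtain ⟨hsym, hdet, c₁, c₂, c₃, hc₁, hc₂, hc₃, hmain⟩ := hx
  refine ⟨1, fun k hk => ?_⟩
  have hk1 : 1 ≤ k + 1 := by omega
  have hk2 : 1 ≤ k + 2 := by omega
  obtain ⟨-, -, ⟨hrecA, hrecB⟩, -, hbig⟩ := hmain k hk
  obtain ⟨-, -, ⟨-, hrecB2⟩, -, -⟩ := hmain (k+1) hk1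
  obtain ⟨-, -, ⟨-, hrecB4⟩, -, -⟩ := hmain (k+2) hk2
  have hPeq : Qpoly x (k+1) = Polynomial.C (x (k+1) 0 1 * x (k+2) 1 1 - x (k+1) 1 1 * x (k+2) 0 1)
      - Polynomial.C (x (k+1) 0 0 * x (k+2) 1 1 - x (k+1) 1 1 * x (k+2) 0 0) * Polynomial.X
      + Polynomial.C (x (k+1) 0 0 * x (k+2) 0 1 - x (k+1) 0 1 * x (k+2) 0 0) * Polynomial.X ^ 2 := rfl
  -- raw entry equations
  have e00b := congrFun (congrFun hrecB 0) 0
  have e01b := congrFun (congrFun hrecB 0) 1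
  have e11b := congrFun (congrFun hrecB 1) 1
  have e01a := congrFun (congrFun hrecA 0) 1
  have e01b3 := congrFun (congrFun hrecB2 0) 1
  have e11b3 := congrFun (congrFun hrecB2 1) 1
  have e11b4 := congrFun (congrFun hrecB4 1) 1
  simp [Matrix.mul_apply, Fin.sum_univ_two, Mmat, pow_succ] at e00b e01b e11b e01a e01b3 e11b3 e11b4
  rw [← hsym (k+1) hk1] at e00b
  rw [← hsym k hk] at e11b
  rw [← hsym (k+1) hk1] at e11b3
  rw [← hsym (k+2) hk2] at e11b4
  have hdk := hdet k hk
  have hdk1 := hdet (k+1) hk1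
  rw [Matrix.det_fin_two, ← hsym k hk] at hdk
  rw [Matrix.det_fin_two, ← hsym (k+1) hk1] at hdk1
  -- abbreviations
  set e : ℤ := (-1)^k with hedef
  set a : ℤ := x k 0 0 with hadef
  set b : ℤ := x k 0 1 with hbdef
  set c : ℤ := x k 1 1 with hcdef
  set A : ℤ := x (k+1) 0 0 with hAdef
  set B : ℤ := x (k+1) 0 1 with hBdef
  set C : ℤ := x (k+1) 1 1 with hCdef
  set a2 : ℤ := x (k+2) 0 0 with ha2def
  set b2 : ℤ := x (k+2) 0 1 with hb2def
  set c2 : ℤ := x (k+2) 1 1 with hc2def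
  set b3 : ℤ := x (k+3) 0 1 with hb3def
  set c3 : ℤ := x (k+3) 1 1 with hc3def
  set c4 : ℤ := x (k+4) 1 1 with hc4def
  have he : e * e = 1 := by rw [hedef, ← mul_pow]; norm_num
  have h1 : a * c - b * b = 1 := by linear_combination hdk
  have h2 : A * C - B * B = 1 := by linear_combination hdk1
  have ea2 : a2 = (3*a - e*b)*A + e*a*B := by linear_combination e00b
  have eb2 : b2 = (3*a - e*b)*B + e*a*C := by linear_combination e01b
  have ec2 : c2 = (3*b - e*c)*B + e*b*C := by linear_combination e11b
  have hr : 3*(a*B - b*A) + e*(a*C + c*A - 2*b*B) = 0 := by linear_combination e01a - e01b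
  have eb3 : b3 = (3*A + e*B)*b2 - e*A*c2 := by linear_combination e01b3
  have ec3 : c3 = (3*B + e*C)*b2 - e*B*c2 := by linear_combination e11b3
  have ec4 : c4 = (3*b2 - e*c2)*b3 + e*b2*c3 := by linear_combination e11b4
  -- the two key integer quantities
  set Ak : ℤ := b * c2 - e * C with hAkv
  set Ek : ℤ := b * c4 - 3 * e * A * c3 - e * c2 with hEkv
  -- a ≠ 0
  have haz : a ≠ 0 := by
    intro h0
    rw [h0] at hbig
    simp only [Int.cast_zero, abs_zero, mul_zero] at hbig
    have h0' : (0:ℝ) ≤ Xnorm x k :=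
      le_trans (abs_nonneg ((x k 0 0 : ℤ) : ℝ)) (le_max_left _ _)
    linarith
  -- polynomial identities
  have idq2 : A*b2 - B*a2 = e*a := by
    rw [ea2, eb2]; linear_combination (e*a) * h2
  have idq1 : A*c2 - C*a2 = 2*e*b - 3*a := by
    rw [ea2, ec2]; linear_combination (-B) * hr + (2*b*e - 3*a) * h2
  have idq0 : B*c2 - C*b2 = a*(((-1)*C^2*e + (-3)*B*C + (-1)*c^2*B^2*e + (1)*b*c*B*C*e + (3)*b*c*B^2)) - b*B*Ak := by
    rw [hAkv, eb2, ec2]; linear_combination (((1)*c*B^2*e + (-1)*b*B*C*e + (-3)*b*B^2)) * h1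
  have idG : Ak = a*(c*C*e + 3*c*B) - 2*C*e - 3*B - b*c*B*e := by
    rw [hAkv, ec2]; linear_combination (((-1)*C*e + (-3)*B)) * h1
  have idD : 2*e = a*(((-2)*c*B^2*e + (1)*c*A*C*e + (1)*b*B*C*e + (3)*b*B^2)) - A*Ak := by
    rw [hAkv, ec2]; linear_combination (-(b*B))*hr + (-(2*e))*h2 + (((2)*B^2*e + (-1)*A*C*e))*h1
  have idE : Ek = (-(c*A*B*e) + b*e + 2*b*B^2*e + 3*b*A*B)*Ak + a*(((-3)*B^2*C*e + (-9)*B^3 + (-3)*A*C^2*e^3 + (-18)*A*B*C*e^2 + (-27)*A*B^2*e + (1)*c^2*B + (-1)*c^2*A*B*C + (-6)*c^2*A*B^2*e + (-1)*b*c*C + (-3)*b*c*B*e + (1)*b*c*B^2*C + (2)*b*c*B^2*C*e^4 + (6)*b*c*B^3*e + (6)*b*c*B^3*e^3 + (1)*b*c*A*C^2 + (9)*b*c*A*B*C*e + (6)*b*c*A*B*C*e^3 + (27)*b*c*A*B^2 + (18)*b*c*A*B^2*e^2 + (-4)*b^2*B*C^2*e^4 + (-30)*b^2*B^2*C*e^3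 + (-54)*b^2*B^3*e^2 + (-6)*b^2*A*C^2*e^3 + (-54)*b^2*A*B*C*e^2 + (-108)*b^2*A*B^2*e + (1)*a*b*C^3*e^4 + (12)*a*b*B*C^2*e^3 + (45)*a*b*B^2*C*e^2 + (54)*a*b*B^3*e + (9)*a*b*A*C^2*e^2 + (54)*a*b*A*B*C*e + (81)*a*b*A*B^2)) := by
    rw [hEkv, hAkv, ec4, eb3, ec3, eb2, ec2]
    linear_combination (3*B^2)*hr + (-(b*C))*h2 + (((-1)*c*B + (1)*c*A*B*C + (6)*c*A*B^2*e + (1)*b*C + (3)*b*B*e + (-1)*b*B^2*C + (-6)*b*B^3*e + (-1)*b*A*C^2 + (-9)*b*A*B*C*e + (-27)*b*A*B^2))*h1 + (((1)*c*B + (-1)*c*A*B*C + (-3)*c*A*B^2*e + (2)*b*B^2*C + (6)*b*A*B*C*e + (18)*b*A*B^2 + (1)*b*c^2*A*B^2*e^2 + (1)*b^2*c*B + (-2)*b^2*c*B^3*e^2 + (-1)*b^2*c*A*B*C + (-2)*b^2*c*A*B*C*e^2 + (-12)*b^2*c*A*B^2*e + (-1)*b^3*C + (1)*b^3*B^2*C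 + (3)*b^3*B^2*C*e^2 + (12)*b^3*B^3*e + (1)*b^3*A*C^2 + (1)*b^3*A*C^2*e^2 + (12)*b^3*A*B*C*e + (36)*b^3*A*B^2))*he
  have idF : 2*e = b*A*e*Ek + a*(((-2)*c*B^2*e + (1)*c*A*C*e + (-2)*c*A*B^2*C*e + (-3)*c*A*B^3 + (1)*c*A^2*C^2*e + (-1)*c^3*A^2*B^2*e + (1)*b*B*C*e + (3)*b*B^2 + (2)*b*A*B*C^2*e + (6)*b*A*B^2*C + (6)*b*A*B^2*C*e^2 + (18)*b*A*B^3*e + (3)*b*A^2*C^2*e^4 + (18)*b*A^2*B*C*e^3 + (27)*b*A^2*B^2*e^2 + (2)*b*c^2*A*B^3*e + (2)*b*c^2*A^2*B*C*e + (12)*b*c^2*A^2*B^2 + (-3)*b^2*c*A*B^2*C*e + (-2)*b^2*c*A*B^2*C*e^5 + (-12)*b^2*c*A*B^3 + (-6)*b^2*c*A*B^3*e^4 + (-1)*b^2*c*A^2*C^2*e + (-12)*b^2*c*A^2*B*C + (-6)*b^2*c*A^2*B*C*e^4 + (-36)*b^2*c*A^2*B^2*e + (-18)*b^2*c*A^2*B^2*e^3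 + (4)*b^3*A*B*C^2*e^5 + (30)*b^3*A*B^2*C*e^4 + (54)*b^3*A*B^3*e^3 + (6)*b^3*A^2*C^2*e^4 + (54)*b^3*A^2*B*C*e^3 + (108)*b^3*A^2*B^2*e^2 + (-1)*a*b^2*A*C^3*e^5 + (-12)*a*b^2*A*B*C^2*e^4 + (-45)*a*b^2*A*B^2*C*e^3 + (-54)*a*b^2*A*B^3*e^2 + (-9)*a*b^2*A^2*C^2*e^3 + (-54)*a*b^2*A^2*B*C*e^2 + (-81)*a*b^2*A^2*B^2*e)) := by
    rw [hEkv, ec4, eb3, ec3, eb2, ec2]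
    linear_combination (((1)*c*A*B^2 + (-1)*b*B + (-2)*b*A*B*C + (-6)*b*A*B^2*e))*hr + (((-2)*e + (-1)*A*C*e))*h2 + (((2)*B^2*e + (-1)*A*C*e + (1)*A*B^2*C*e + (-1)*A^2*C^2*e + (1)*c^2*A^2*B^2*e + (-2)*b*c*A*B^3*e + (-2)*b*c*A^2*B*C*e + (-12)*b*c*A^2*B^2 + (3)*b^2*A*B^2*C*e + (12)*b^2*A*B^3 + (1)*b^2*A^2*C^2*e + (12)*b^2*A^2*B*C + (36)*b^2*A^2*B^2*e))*h1 + (((-1)*b*c*A*B*e + (9)*b*c*A^2*B^2 + (3)*b*c*A^2*B^2*e^2 + (1)*b^2*A*C*e + (3)*b^2*A*B + (-12)*b^2*A*B^3 + (-6)*b^2*A^2*B*C + (-6)*b^2*A^2*B*C*e^2 + (-18)*b^2*A^2*B^2*e + (-1)*b^2*c^2*A^2*B^2*e + (-1)*b^2*c^2*A^2*B^2*e^3 + (2)*b^3*c*A*B^3*e + (2)*b^3*c*A*B^3*e^3 + (2)*b^3*c*A^2*B*C*e + (2)*b^3*c*A^2*B*C*e^3 + (12)*b^3*c*A^2*B^2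 + (12)*b^3*c*A^2*B^2*e^2 + (-3)*b^4*A*B^2*C*e + (-3)*b^4*A*B^2*C*e^3 + (-12)*b^4*A*B^3 + (-12)*b^4*A*B^3*e^2 + (-1)*b^4*A^2*C^2*e + (-1)*b^4*A^2*C^2*e^3 + (-12)*b^4*A^2*B*C + (-12)*b^4*A^2*B*C*e^2 + (-36)*b^4*A^2*B^2*e))*he
  have id2 : (2:ℤ) = a*(2*c - 3*e*b) - e*b*(A*c2 - C*a2) := by
    rw [idq1]; linear_combination (-2)*h1 + (2*b*b)*he
  -- coefficients of Qpoly
  have hco0 : (Qpoly x (k+1)).coeff 0 = B*c2 - C*b2 := by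
    rw [hPeq]
    simp only [Polynomial.coeff_add, Polynomial.coeff_sub, Polynomial.coeff_C_mul,
      Polynomial.coeff_C, Polynomial.coeff_X, Polynomial.coeff_X_pow]
    norm_num
  have hco1 : (Qpoly x (k+1)).coeff 1 = -(A*c2 - C*a2) := by
    rw [hPeq]
    simp only [Polynomial.coeff_add, Polynomial.coeff_sub, Polynomial.coeff_C_mul,
      Polynomial.coeff_C, Polynomial.coeff_X, Polynomial.coeff_X_pow]
    norm_num
  have hco2 : (Qpoly x (k+1)).coeff 2 = A*b2 - B*a2 := by
    rw [hPeq]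
    simp only [Polynomial.coeff_add, Polynomial.coeff_sub, Polynomial.coeff_C_mul,
      Polynomial.coeff_C, Polynomial.coeff_X, Polynomial.coeff_X_pow]
    norm_num
  have hco3 : ∀ n : ℕ, (Qpoly x (k+1)).coeff (n+3) = 0 := by
    intro n
    rw [hPeq]
    simp only [Polynomial.coeff_add, Polynomial.coeff_sub, Polynomial.coeff_C_mul,
      Polynomial.coeff_C, Polynomial.coeff_X, Polynomial.coeff_X_pow]
    have h0 : ¬(n + 3 = 0) := by omega
    have h1 : ¬(n + 3 = 1) := by omega
    have h2 : ¬(n + 3 = 2) := by omega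
    simp [h0, h1, h2]
  set g : ℤ := (Qpoly x (k+1)).content with hgdef
  have hgnn : 0 ≤ g := by
    have h := Polynomial.normalize_content (p := Qpoly x (k+1))
    rw [← Int.abs_eq_normalize] at h
    rw [hgdef, ← h]; exact abs_nonneg _
  -- content divides the coefficients
  have g_q0 : g ∣ B*c2 - C*b2 := hco0 ▸ Polynomial.content_dvd_coeff 0
  have g_q1 : g ∣ A*c2 - C*a2 := by
    have := Polynomial.content_dvd_coeff (p := Qpoly x (k+1)) 1
    rw [hco1, dvd_neg] at this; exact this
  have g_q2 : g ∣ A*b2 - B*a2 := hco2 ▸ Polynomial.content_dvd_coeff 2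
  have g_a : g ∣ a := by
    have h' : a = e*(A*b2 - B*a2) := by rw [idq2]; linear_combination (-a)*he
    rw [h']; exact Dvd.dvd.mul_left g_q2 e
  have g_2 : g ∣ 2 := by
    rw [id2]; exact dvd_sub (g_a.mul_right _) (g_q1.mul_left _)
  have g_Ak : g ∣ Ak := by
    have hg12 : g = 1 ∨ g = 2 := by
      have hq2ne : A*b2 - B*a2 ≠ 0 := by
        rw [idq2]
        intro hz
        rcases mul_eq_zero.mp hz with hz' | hz'
        · rw [hz'] at he; norm_num at he
        · exact haz hz'
      have hgne : g ≠ 0 := by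
        intro hz
        exact hq2ne (by rw [← hco2]; exact (Polynomial.content_eq_zero_iff.mp hz) ▸ (by simp))
      have := Int.le_of_dvd (by norm_num) g_2
      omega
    rcases hg12 with hg1 | hg2
    · rw [hg1]; exact one_dvd _
    · rw [hg2]
      rw [hg2] at g_a g_q0
      exact aux_par1 a b c B C e (((-1)*C^2*e + (-3)*B*C + (-1)*c^2*B^2*e + (1)*b*c*B*C*e + (3)*b*c*B^2)) Ak (B*c2 - C*b2) h1 he idG idq0 g_a g_q0
  -- gcd(a, Ak) divides everything
  have d_a : (↑(Int.gcd a Ak) : ℤ) ∣ a := Int.gcd_dvd_left a Ak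
  have d_Ak : (↑(Int.gcd a Ak) : ℤ) ∣ Ak := Int.gcd_dvd_right a Ak
  have d_2 : (↑(Int.gcd a Ak) : ℤ) ∣ 2 := by
    have h2e : (↑(Int.gcd a Ak) : ℤ) ∣ 2*e := by
      rw [idD]; exact dvd_sub (d_a.mul_right _) (d_Ak.mul_left _)
    have : (2:ℤ) = (2*e)*e := by linear_combination (-2)*he
    rw [this]; exact h2e.mul_right e
  have d_q0 : (↑(Int.gcd a Ak) : ℤ) ∣ B*c2 - C*b2 := by
    rw [idq0]; exact dvd_sub (d_a.mul_right _) (d_Ak.mul_left _)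
  have d_q1 : (↑(Int.gcd a Ak) : ℤ) ∣ A*c2 - C*a2 := by
    rw [idq1]
    have : 2*e*b - 3*a = 2*(e*b) - a*3 := by ring
    rw [this]; exact dvd_sub (d_2.mul_right _) (d_a.mul_right _)
  have d_q2 : (↑(Int.gcd a Ak) : ℤ) ∣ A*b2 - B*a2 := by
    rw [idq2]; exact d_a.mul_left e
  have d_g : (↑(Int.gcd a Ak) : ℤ) ∣ g := by
    rw [hgdef]
    refine Finset.dvd_gcd fun i _ => ?_
    rcases i with _ | _ | _ | i
    · rw [hco0]; exact d_q0
    · rw [hco1]; exact dvd_neg.mpr d_q1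
    · rw [hco2]; exact d_q2
    · rw [hco3 i]; exact dvd_zero _
  have g_d : g ∣ (↑(Int.gcd a Ak) : ℤ) := Int.dvd_coe_gcd g_a g_Ak
  have eq1 : (↑(Int.gcd a Ak) : ℤ) = g :=
    Int.dvd_antisymm (Int.natCast_nonneg _) hgnn d_g g_d
  -- now the E part
  have d_Ek : (↑(Int.gcd a Ak) : ℤ) ∣ Ek := by
    rw [idE]; exact dvd_add (d_Ak.mul_left _) (d_a.mul_right _)
  have d'_a : (↑(Int.gcd a Ek) : ℤ) ∣ a := Int.gcd_dvd_left a Ek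
  have d'_Ek : (↑(Int.gcd a Ek) : ℤ) ∣ Ek := Int.gcd_dvd_right a Ek
  have d'_2 : (↑(Int.gcd a Ek) : ℤ) ∣ 2 := by
    have h2e : (↑(Int.gcd a Ek) : ℤ) ∣ 2*e := by
      rw [idF]; exact dvd_add (d'_Ek.mul_left _) (d'_a.mul_right _)
    have : (2:ℤ) = (2*e)*e := by linear_combination (-2)*he
    rw [this]; exact h2e.mul_right e
  have d'_Ak : (↑(Int.gcd a Ek) : ℤ) ∣ Ak := by
    have hd12 : Int.gcd a Ek = 1 ∨ Int.gcd a Ek = 2 := by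
      have h2n : Int.gcd a Ek ∣ 2 := Int.ofNat_dvd.mp d'_2
      have hne : Int.gcd a Ek ≠ 0 := by
        intro hz
        exact haz (Int.gcd_eq_zero_iff.mp hz).1
      have := Nat.le_of_dvd (by norm_num) h2n
      interval_cases h : Int.gcd a Ek
      · omega
      · left; rfl
      · right; rfl
    rcases hd12 with hd1 | hd2
    · rw [hd1]; exact one_dvd _
    · rw [hd2]
      have h2a : (2:ℤ) ∣ a := by rw [hd2] at d'_a; exact_mod_cast d'_a
      have h2E : (2:ℤ) ∣ Ek := by rw [hd2] at d'_Ek; exact_mod_cast d'_Ek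
      have := aux_par2 a b c A B C e (((-3)*B^2*C*e + (-9)*B^3 + (-3)*A*C^2*e^3 + (-18)*A*B*C*e^2 + (-27)*A*B^2*e + (1)*c^2*B + (-1)*c^2*A*B*C + (-6)*c^2*A*B^2*e + (-1)*b*c*C + (-3)*b*c*B*e + (1)*b*c*B^2*C + (2)*b*c*B^2*C*e^4 + (6)*b*c*B^3*e + (6)*b*c*B^3*e^3 + (1)*b*c*A*C^2 + (9)*b*c*A*B*C*e + (6)*b*c*A*B*C*e^3 + (27)*b*c*A*B^2 + (18)*b*c*A*B^2*e^2 + (-4)*b^2*B*C^2*e^4 + (-30)*b^2*B^2*C*e^3 + (-54)*b^2*B^3*e^2 + (-6)*b^2*A*C^2*e^3 + (-54)*b^2*A*B*C*e^2 + (-108)*b^2*A*B^2*e + (1)*a*b*C^3*e^4 + (12)*a*b*B*C^2*e^3 + (45)*a*b*B^2*C*e^2 + (54)*a*b*B^3*e + (9)*a*b*A*C^2*e^2 + (54)*a*b*A*B*C*e + (81)*a*b*A*B^2)) Ak Ek h1 h2 he hr idG idE h2a h2E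
      exact_mod_cast this
  have hdd : Int.gcd a Ak = Int.gcd a Ek := by
    apply Nat.dvd_antisymm
    · rw [← Int.natCast_dvd_natCast]; exact Int.dvd_coe_gcd d_a d_Ek
    · rw [← Int.natCast_dvd_natCast]; exact Int.dvd_coe_gcd d'_a d'_Ak
  refine ⟨eq1, ?_, ?_⟩
  · rw [← hdd]; exact eq1
  · have hg12 : g = 1 ∨ g = 2 := by
      have hq2ne : A*b2 - B*a2 ≠ 0 := by
        rw [idq2]
        intro hz
        rcases mul_eq_zero.mp hz with hz' | hz'
        · rw [hz'] at he; norm_num at he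
        · exact haz hz'
      have hgne : g ≠ 0 := by
        intro hz
        exact hq2ne (by rw [← hco2]; exact (Polynomial.content_eq_zero_iff.mp hz) ▸ (by simp))
      have := Int.le_of_dvd (by norm_num) g_2
      omega
    exact hg12
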